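/- Suppose A ∈ B(V^N, V^m) has the weighted rNSP over V of order (k,w) with constants 0 < ρ < 1 and γ > 0. Fix x ∈ V^N, b ∈ V^m, and set e = Ax − b. Consider the weighted SR-LASSO objective G(z) = λ‖z‖_{1,w;V} + ‖Az − b‖_{2;V} with parameter 0 < λ ≤ ((1+ρ)²/((3+ρ)γ)) k^{−1/2}. Then for any x̃ ∈ V^N: ‖x̃ − x‖_{2;V} ≤ (C₁'/√k)(2σ_k(x)_{1,w;V} + (G(x̃) − G(x))/λ) + (C₁'/(√k λ) + C₂')‖e‖_{2;V}, where C₁' = (1+ρ)²/(1−ρ) and C₂' = (3+ρ)γ/(1−ρ). -/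

import Mathlib

/-- The `ℓ²`-norm of a `V`-valued vector: `‖x‖_{2;V} = (∑ i ‖x i‖²)^{1/2}`. -/
noncomputable def l2norm {ι : Type*} [Fintype ι] {V : Type*} [NormedAddCommGroup V]
    (x : ι → V) : ℝ := Real.sqrt (∑ i, ‖x i‖ ^ 2)

/-- The weighted `ℓ¹_w`-norm of a `V`-valued vector: `‖x‖_{1,w;V} = ∑ i w i ‖x i‖`. -/
noncomputable def l1wnorm {ι : Type*} [Fintype ι] {V : Type*} [NormedAddCommGroup V]
    (w : ι → ℝ) (x : ι → V) : ℝ := ∑ i, w i * ‖x i‖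

/-- Weighted best `(k,w)`-term approximation error in the `ℓ¹_w`-norm:
`σ_k(x)_{1,w;V} = inf { ‖x − x_S‖_{1,w;V} : |S|_w ≤ k }`. -/
noncomputable def sigmaK {ι : Type*} [Fintype ι] [DecidableEq ι] {V : Type*} [NormedAddCommGroup V]
    (k : ℝ) (w : ι → ℝ) (x : ι → V) : ℝ :=
  sInf {r : ℝ | ∃ S : Finset ι, (∑ i ∈ S, w i ^ 2) ≤ k ∧
    r = l1wnorm w fun i => if i ∈ S then 0 else x i}

/-- The weighted robust null space property over `V` of order `(k,w)` with
constants `ρ` and `γ`. -/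
def wRNSP {N m : ℕ} {V : Type*} [NormedAddCommGroup V] [InnerProductSpace ℂ V]
    (A : (Fin N → V) →L[ℂ] (Fin m → V)) (k : ℝ) (w : Fin N → ℝ) (ρ γ : ℝ) : Prop :=
  ∀ (x : Fin N → V) (S : Finset (Fin N)), (∑ i ∈ S, w i ^ 2) ≤ k →
    l2norm (fun i => if i ∈ S then x i else 0) ≤
      ρ * l1wnorm w (fun i => if i ∈ S then 0 else x i) / Real.sqrt k +
        γ * l2norm (A x)

/-- The Hilbert-valued weighted SR-LASSO objective
`G(z) = λ‖z‖_{1,w;V} + ‖Az − b‖_{2;V}`. -/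
noncomputable def Gobj {N m : ℕ} {V : Type*} [NormedAddCommGroup V]
    [InnerProductSpace ℂ V]
    (A : (Fin N → V) →L[ℂ] (Fin m → V)) (w : Fin N → ℝ) (lam : ℝ)
    (z : Fin N → V) (b : Fin m → V) : ℝ :=
  lam * l1wnorm w z + l2norm (A z - b)

section helpers
variable {ι : Type*} [Fintype ι] {V : Type*} [NormedAddCommGroup V]

lemma l2norm_nonneg (x : ι → V) : 0 ≤ l2norm x := Real.sqrt_nonneg _

lemma l2norm_eq_norm (x : ι → V) :
    l2norm x = ‖(WithLp.equiv 2 (ι → V)).symm x‖ := by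
  rw [PiLp.norm_eq_of_L2]; rfl

lemma l2norm_add_le (x y : ι → V) : l2norm (x + y) ≤ l2norm x + l2norm y := by
  simp only [l2norm_eq_norm]
  exact norm_add_le ((WithLp.equiv 2 (ι → V)).symm x) ((WithLp.equiv 2 (ι → V)).symm y)

lemma l2norm_sub_le (x y : ι → V) : l2norm (x - y) ≤ l2norm x + l2norm y := by
  simp only [l2norm_eq_norm]
  exact norm_sub_le ((WithLp.equiv 2 (ι → V)).symm x) ((WithLp.equiv 2 (ι → V)).symm y)

lemma l1wnorm_nonneg {w : ι → ℝ} (hw : ∀ i, 0 ≤ w i) (x : ι → V) : 0 ≤ l1wnorm w x :=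
  Finset.sum_nonneg fun i _ => mul_nonneg (hw i) (norm_nonneg _)

lemma l1wnorm_split [DecidableEq ι] (w : ι → ℝ) (x : ι → V) (S : Finset ι) :
    l1wnorm w x = l1wnorm w (fun i => if i ∈ S then x i else 0)
      + l1wnorm w (fun i => if i ∈ S then 0 else x i) := by
  unfold l1wnorm
  rw [← Finset.sum_add_distrib]
  refine Finset.sum_congr rfl fun i _ => ?_
  by_cases hi : i ∈ S <;> simp [hi]

lemma l2norm_split_le [DecidableEq ι] (x : ι → V) (S : Finset ι) :
    l2norm x ≤ l2norm (fun i => if i ∈ S then x i else 0)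
      + l2norm (fun i => if i ∈ S then 0 else x i) := by
  have hx : x = (fun i => if i ∈ S then x i else 0) + (fun i => if i ∈ S then 0 else x i) := by
    funext i; by_cases hi : i ∈ S <;> simp [hi]
  nth_rewrite 1 [hx]
  exact l2norm_add_le _ _

lemma l1wnorm_le_add {w : ι → ℝ} (hw : ∀ i, 0 ≤ w i) {a b c : ι → V}
    (hpt : ∀ i, ‖a i‖ ≤ ‖b i‖ + ‖c i‖) : l1wnorm w a ≤ l1wnorm w b + l1wnorm w c := by
  unfold l1wnorm
  rw [← Finset.sum_add_distrib]
  refine Finset.sum_le_sum fun i _ => ?_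
  calc w i * ‖a i‖ ≤ w i * (‖b i‖ + ‖c i‖) := mul_le_mul_of_nonneg_left (hpt i) (hw i)
    _ = w i * ‖b i‖ + w i * ‖c i‖ := by ring

lemma l1wnorm_mask_le [DecidableEq ι] {w : ι → ℝ} (hw : ∀ i, 0 ≤ w i) (x : ι → V)
    (S : Finset ι) :
    l1wnorm w (fun i => if i ∈ S then 0 else x i) ≤ l1wnorm w x := by
  refine Finset.sum_le_sum fun i _ => ?_
  by_cases hi : i ∈ S <;> simp [hi]
  exact mul_nonneg (hw i) (norm_nonneg _)

/-- Cauchy–Schwarz for the masked part. -/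
lemma l1wnorm_maskS_le_sqrt [DecidableEq ι] {w : ι → ℝ} (hw : ∀ i, 0 ≤ w i) (x : ι → V)
    (S : Finset ι) {k : ℝ} (hk : 0 ≤ k) (hS : (∑ i ∈ S, w i ^ 2) ≤ k) :
    l1wnorm w (fun i => if i ∈ S then x i else 0) ≤
      Real.sqrt k * l2norm (fun i => if i ∈ S then x i else 0) := by
  have h1 : l1wnorm w (fun i => if i ∈ S then x i else 0) = ∑ i ∈ S, w i * ‖x i‖ := by
    unfold l1wnorm
    rw [← Finset.sum_filter_add_sum_filter_not Finset.univ (· ∈ S)]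
    have h2 : ∑ i ∈ Finset.univ.filter (· ∉ S), w i * ‖if i ∈ S then x i else 0‖ = 0 := by
      refine Finset.sum_eq_zero fun i hi => ?_
      simp only [Finset.mem_filter] at hi
      simp [hi.2]
    rw [h2, add_zero]
    refine Finset.sum_congr (by simp [Finset.filter_mem_eq_inter]) fun i hi => ?_
    simp only [Finset.mem_filter] at hi ⊢
    simp [hi]
  have h2 : l2norm (fun i => if i ∈ S then x i else 0) =
      Real.sqrt (∑ i ∈ S, ‖x i‖ ^ 2) := by
    unfold l2norm
    congr 1
    rw [← Finset.sum_filter_add_sum_filter_not Finset.univ (· ∈ S)]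
    have h3 : ∑ i ∈ Finset.univ.filter (· ∉ S), ‖if i ∈ S then x i else 0‖ ^ 2 = 0 := by
      refine Finset.sum_eq_zero fun i hi => ?_
      simp only [Finset.mem_filter] at hi
      simp [hi.2]
    rw [h3, add_zero]
    refine Finset.sum_congr (by simp [Finset.filter_mem_eq_inter]) fun i hi => ?_
    simp only [Finset.mem_filter] at hi ⊢
    simp [hi]
  have hsum2 : (0:ℝ) ≤ ∑ i ∈ S, ‖x i‖ ^ 2 :=
    Finset.sum_nonneg fun i _ => sq_nonneg _
  rw [h1, h2, ← Real.sqrt_mul hk]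
  rw [Real.le_sqrt (Finset.sum_nonneg fun i _ => mul_nonneg (hw i) (norm_nonneg _))
    (mul_nonneg hk hsum2)]
  calc (∑ i ∈ S, w i * ‖x i‖) ^ 2 ≤ (∑ i ∈ S, w i ^ 2) * ∑ i ∈ S, ‖x i‖ ^ 2 :=
        Finset.sum_mul_sq_le_sq_mul_sq S w (fun i => ‖x i‖)
    _ ≤ k * ∑ i ∈ S, ‖x i‖ ^ 2 := mul_le_mul_of_nonneg_right hS hsum2

end helpers

/-- The `ℓ²` bound implied by the weighted rNSP (cleared of denominators):
`√k ‖v‖₂ ≤ (1+ρ)‖v‖_{1,w} + γ√k ‖Av‖₂`. -/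
lemma sqrt_mul_l2_le_of_wRNSP {V : Type*} [NormedAddCommGroup V] [InnerProductSpace ℂ V]
    {N m : ℕ} (A : (Fin N → V) →L[ℂ] (Fin m → V)) {k : ℝ} (hk : 0 < k) {w : Fin N → ℝ}
    (hw : ∀ i, 0 < w i) {ρ γ : ℝ} (hρ0 : 0 ≤ ρ) (hγ : 0 ≤ γ)
    (h : wRNSP A k w ρ γ) (v : Fin N → V) :
    Real.sqrt k * l2norm v ≤ (1 + ρ) * l1wnorm w v + γ * Real.sqrt k * l2norm (A v) := by
  have hsk : 0 < Real.sqrt k := Real.sqrt_pos.mpr hk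
  have ht0 : 0 ≤ l1wnorm w v := l1wnorm_nonneg (fun i => (hw i).le) v
  set t := l1wnorm w v with htdef
  rcases eq_or_lt_of_le ht0 with h0 | htpos
  · -- t = 0, hence v = 0
    have hv : v = 0 := by
      funext i
      have hnn : ∀ j ∈ Finset.univ, (0:ℝ) ≤ w j * ‖v j‖ :=
        fun j _ => mul_nonneg (hw j).le (norm_nonneg _)
      have hz := (Finset.sum_eq_zero_iff_of_nonneg hnn).mp h0.symm i (Finset.mem_univ i)
      have := (mul_eq_zero.mp hz).resolve_left (ne_of_gt (hw i))
      simpa using this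
    subst hv
    have hz1 : l2norm (0 : Fin N → V) = 0 := by simp [l2norm]
    have hz2 : l2norm (A (0 : Fin N → V)) = 0 := by rw [map_zero]; simp [l2norm]
    rw [hz1, hz2]
    have : (0:ℝ) ≤ (1 + ρ) * t := mul_nonneg (by linarith) ht0
    nlinarith
  · -- t > 0
    classical
    set S : Finset (Fin N) := Finset.univ.filter (fun i => t / k * w i < ‖v i‖) with hSdef
    have hSk : (∑ i ∈ S, w i ^ 2) ≤ k := by
      have hterm : ∀ i ∈ S, w i ^ 2 ≤ k / t * (w i * ‖v i‖) := by
        intro i hi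
        have hc : t / k * w i < ‖v i‖ := by
          simpa [hSdef] using (Finset.mem_filter.mp hi).2
        have hwi := hw i
        have h1 : t / k * w i ^ 2 ≤ w i * ‖v i‖ := by nlinarith
        have h2 : w i ^ 2 = k / t * (t / k * w i ^ 2) := by field_simp
        rw [h2]
        exact mul_le_mul_of_nonneg_left h1 (by positivity)
      calc (∑ i ∈ S, w i ^ 2) ≤ ∑ i ∈ S, k / t * (w i * ‖v i‖) :=
            Finset.sum_le_sum hterm
        _ = k / t * ∑ i ∈ S, w i * ‖v i‖ := by rw [Finset.mul_sum]
        _ ≤ k / t * t := by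
            refine mul_le_mul_of_nonneg_left ?_ (by positivity)
            exact Finset.sum_le_sum_of_subset_of_nonneg (Finset.subset_univ S)
              fun i _ _ => mul_nonneg (hw i).le (norm_nonneg _)
        _ = k := by field_simp
    have hTailSum : (∑ i, ‖(fun i => if i ∈ S then 0 else v i) i‖ ^ 2) ≤ t ^ 2 / k := by
      have hterm : ∀ i ∈ Finset.univ,
          ‖(fun i => if i ∈ S then 0 else v i) i‖ ^ 2 ≤ t / k * (w i * ‖v i‖) := by
        intro i _
        by_cases hi : i ∈ S
        · simp only [hi, if_true]
          have : (0:ℝ) ≤ t / k * (w i * ‖v i‖) :=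
            mul_nonneg (div_nonneg ht0 hk.le) (mul_nonneg (hw i).le (norm_nonneg _))
          simpa using this
        · simp only [hi, if_false]
          have hc : ¬ (t / k * w i < ‖v i‖) := by
            intro hcon
            exact hi (by simp [hSdef, hcon])
          push_neg at hc
          nlinarith [norm_nonneg (v i), hw i, mul_pos htpos (inv_pos.mpr hk)]
      calc (∑ i, ‖(fun i => if i ∈ S then 0 else v i) i‖ ^ 2)
            ≤ ∑ i, t / k * (w i * ‖v i‖) := Finset.sum_le_sum hterm
        _ = t / k * t := by rw [← Finset.mul_sum, htdef, l1wnorm]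
        _ = t ^ 2 / k := by ring
    have hTail : l2norm (fun i => if i ∈ S then 0 else v i) ≤ t / Real.sqrt k := by
      have := Real.sqrt_le_sqrt hTailSum
      calc l2norm (fun i => if i ∈ S then 0 else v i) ≤ Real.sqrt (t ^ 2 / k) := this
        _ = t / Real.sqrt k := by
            rw [Real.sqrt_div (sq_nonneg t), Real.sqrt_sq ht0]
    have hrnsp := h v S hSk
    have hl1c : l1wnorm w (fun i => if i ∈ S then 0 else v i) ≤ t :=
      l1wnorm_mask_le (fun i => (hw i).le) v S
    have hsplit := l2norm_split_le v S
    have hE0 : 0 ≤ l2norm (A v) := l2norm_nonneg _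
    -- combine
    have h1 : l2norm v ≤ ρ * t / Real.sqrt k + γ * l2norm (A v) + t / Real.sqrt k := by
      have h2 : ρ * l1wnorm w (fun i => if i ∈ S then 0 else v i) / Real.sqrt k ≤
          ρ * t / Real.sqrt k := by
        exact (div_le_div_iff_of_pos_right hsk).mpr (mul_le_mul_of_nonneg_left hl1c hρ0)
      linarith
    have := mul_le_mul_of_nonneg_left h1 hsk.le
    calc Real.sqrt k * l2norm v ≤
          Real.sqrt k * (ρ * t / Real.sqrt k + γ * l2norm (A v) + t / Real.sqrt k) := this
      _ = (1 + ρ) * t + γ * Real.sqrt k * l2norm (A v) := by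
          field_simp
          ring

set_option maxHeartbeats 1000000 in
/-- Weighted rNSP implies `ℓ²` error bounds for inexact minimizers of the
weighted SR-LASSO. -/
theorem wRNSP_inexact_minimizer_bound {V : Type*} [NormedAddCommGroup V]
    [InnerProductSpace ℂ V] [CompleteSpace V] {N m : ℕ}
    (A : (Fin N → V) →L[ℂ] (Fin m → V)) (k : ℝ) (hk : 0 < k)
    (w : Fin N → ℝ) (hw : ∀ i, 0 < w i)
    (ρ γ : ℝ) (hρ0 : 0 < ρ) (hρ1 : ρ < 1) (hγ : 0 < γ)
    (h : wRNSP A k w ρ γ)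
    (x : Fin N → V) (b : Fin m → V) (e : Fin m → V) (he : e = A x - b)
    (lam : ℝ) (hlam0 : 0 < lam)
    (hlam : lam ≤ (1 + ρ) ^ 2 / ((3 + ρ) * γ) * (Real.sqrt k)⁻¹)
    (xt : Fin N → V) :
    l2norm (xt - x) ≤
      (1 + ρ) ^ 2 / (1 - ρ) / Real.sqrt k *
          (2 * sigmaK k w x + (Gobj A w lam xt b - Gobj A w lam x b) / lam) +
        ((1 + ρ) ^ 2 / (1 - ρ) / (Real.sqrt k * lam) + (3 + ρ) * γ / (1 - ρ)) *
          l2norm e := by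
  have hw' : ∀ i, 0 ≤ w i := fun i => (hw i).le
  have hsk : 0 < Real.sqrt k := Real.sqrt_pos.mpr hk
  have h1ρ : (0:ℝ) < 1 - ρ := by linarith
  have h1ρ' : (0:ℝ) ≤ 1 + ρ := by linarith
  set v : Fin N → V := xt - x with hvdef
  set E : ℝ := l2norm e with hEdef
  set rr : ℝ := l2norm (A xt - b) with hrdef
  have hE0 : 0 ≤ E := l2norm_nonneg e
  have hr0 : 0 ≤ rr := l2norm_nonneg _
  have hAveq : A v = (A xt - b) - e := by
    rw [hvdef, map_sub, he]; abel
  have hAv : l2norm (A v) ≤ rr + E := by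
    rw [hAveq, hrdef, hEdef]; exact l2norm_sub_le _ _
  have hGx : Gobj A w lam x b = lam * l1wnorm w x + E := by
    rw [hEdef, he]; rfl
  have hGxt : Gobj A w lam xt b = lam * l1wnorm w xt + rr := rfl
  set ΔG : ℝ := Gobj A w lam xt b - Gobj A w lam x b with hDG
  have hDGeq : ΔG = lam * (l1wnorm w xt - l1wnorm w x) + rr - E := by
    rw [hDG, hGxt, hGx]; ring
  have hB2 := sqrt_mul_l2_le_of_wRNSP A hk hw hρ0.le hγ.le h v
  have hlam' : (3 + ρ) * γ * (Real.sqrt k * lam) ≤ (1 + ρ) ^ 2 := by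
    have h3 : (0:ℝ) < 3 + ρ := by linarith
    have hkey := mul_le_mul_of_nonneg_left hlam (mul_pos (mul_pos h3 hγ) hsk).le
    calc (3 + ρ) * γ * (Real.sqrt k * lam) = (3 + ρ) * γ * Real.sqrt k * lam := by ring
      _ ≤ (3 + ρ) * γ * Real.sqrt k * ((1 + ρ) ^ 2 / ((3 + ρ) * γ) * (Real.sqrt k)⁻¹) := hkey
      _ = (1 + ρ) ^ 2 := by field_simp
  -- the bound for every admissible support set S
  have key : ∀ s ∈ {r : ℝ | ∃ S : Finset (Fin N), (∑ i ∈ S, w i ^ 2) ≤ k ∧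
      r = l1wnorm w fun i => if i ∈ S then 0 else x i},
      l2norm v ≤ (2 * ((1 + ρ) ^ 2 / (1 - ρ) / Real.sqrt k)) * s +
        ((1 + ρ) ^ 2 / (1 - ρ) / Real.sqrt k * (ΔG / lam) +
          ((1 + ρ) ^ 2 / (1 - ρ) / (Real.sqrt k * lam) + (3 + ρ) * γ / (1 - ρ)) * E) := by
    rintro s ⟨S, hSk, rfl⟩
    have hσ0 : 0 ≤ l1wnorm w (fun i => if i ∈ S then 0 else x i) := l1wnorm_nonneg hw' _
    have hsplit : l1wnorm w v = l1wnorm w (fun i => if i ∈ S then v i else 0)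
        + l1wnorm w (fun i => if i ∈ S then 0 else v i) := l1wnorm_split w v S
    have hCS := l1wnorm_maskS_le_sqrt hw' v S hk.le hSk
    have hrnsp := h v S hSk
    have hEv0 : 0 ≤ l2norm (A v) := l2norm_nonneg _
    have h2 : l1wnorm w (fun i => if i ∈ S then v i else 0) ≤
        ρ * l1wnorm w (fun i => if i ∈ S then 0 else v i) +
          γ * Real.sqrt k * l2norm (A v) := by
      have hh := mul_le_mul_of_nonneg_left hrnsp hsk.le
      calc l1wnorm w (fun i => if i ∈ S then v i else 0)
          ≤ Real.sqrt k * l2norm (fun i => if i ∈ S then v i else 0) := hCS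
        _ ≤ Real.sqrt k * (ρ * l1wnorm w (fun i => if i ∈ S then 0 else v i) / Real.sqrt k +
              γ * l2norm (A v)) := hh
        _ = ρ * l1wnorm w (fun i => if i ∈ S then 0 else v i) +
              γ * Real.sqrt k * l2norm (A v) := by field_simp
    have hA1 : l1wnorm w (fun i => if i ∈ S then x i else 0) ≤
        l1wnorm w (fun i => if i ∈ S then xt i else 0) +
          l1wnorm w (fun i => if i ∈ S then v i else 0) := by
      refine l1wnorm_le_add hw' fun i => ?_
      by_cases hi : i ∈ S
      · simp only [hi, if_true, hvdef, Pi.sub_apply]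
        calc ‖x i‖ = ‖xt i - (xt i - x i)‖ := by congr 1; abel
          _ ≤ ‖xt i‖ + ‖xt i - x i‖ := norm_sub_le _ _
      · simp [hi]
    have hB1 : l1wnorm w (fun i => if i ∈ S then 0 else v i) ≤
        l1wnorm w (fun i => if i ∈ S then 0 else xt i) +
          l1wnorm w (fun i => if i ∈ S then 0 else x i) := by
      refine l1wnorm_le_add hw' fun i => ?_
      by_cases hi : i ∈ S
      · simp [hi]
      · simp only [hi, if_false, hvdef, Pi.sub_apply]
        exact norm_sub_le _ _
    have hsx : l1wnorm w x = l1wnorm w (fun i => if i ∈ S then x i else 0) +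
        l1wnorm w (fun i => if i ∈ S then 0 else x i) := l1wnorm_split w x S
    have hsxt : l1wnorm w xt = l1wnorm w (fun i => if i ∈ S then xt i else 0) +
        l1wnorm w (fun i => if i ∈ S then 0 else xt i) := l1wnorm_split w xt S
    have h4 : (1 - ρ) * l1wnorm w (fun i => if i ∈ S then 0 else v i) ≤
        (l1wnorm w xt - l1wnorm w x) +
          2 * l1wnorm w (fun i => if i ∈ S then 0 else x i) +
          γ * Real.sqrt k * l2norm (A v) := by linarith [hB1, hsxt, hsx, hA1, h2]
    have h5 : (1 - ρ) * l1wnorm w v ≤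
        (1 + ρ) * ((l1wnorm w xt - l1wnorm w x) +
          2 * l1wnorm w (fun i => if i ∈ S then 0 else x i)) +
          2 * γ * Real.sqrt k * l2norm (A v) := by
      have h6 := mul_le_mul_of_nonneg_left h4 h1ρ'
      have h7 := mul_le_mul_of_nonneg_left h2 h1ρ.le
      have hbb0 : 0 ≤ l1wnorm w (fun i => if i ∈ S then 0 else v i) := l1wnorm_nonneg hw' _
      have p8 : 0 ≤ ρ * (1 - ρ) * l1wnorm w (fun i => if i ∈ S then 0 else v i) :=
        mul_nonneg (mul_nonneg hρ0.le h1ρ.le) hbb0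
      rw [hsplit]
      nlinarith [h6, h7, p8]
    have hclear : (1 - ρ) * (Real.sqrt k * (lam * l2norm v)) ≤
        2 * (1 + ρ) ^ 2 * lam * l1wnorm w (fun i => if i ∈ S then 0 else x i) +
          (1 + ρ) ^ 2 * ΔG +
          ((1 + ρ) ^ 2 + (3 + ρ) * γ * (Real.sqrt k * lam)) * E := by
      have p1 := mul_le_mul_of_nonneg_left hB2 (mul_nonneg h1ρ.le hlam0.le)
      have p2 := mul_le_mul_of_nonneg_left h5 (mul_nonneg h1ρ' hlam0.le)
      have p3 := mul_le_mul_of_nonneg_left hAv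
        (show (0:ℝ) ≤ (3 + ρ) * γ * (Real.sqrt k * lam) from
          mul_nonneg (mul_nonneg (by linarith) hγ.le) (mul_nonneg hsk.le hlam0.le))
      have p4 := mul_le_mul_of_nonneg_right hlam' hr0
      rw [hDGeq]
      linarith [p1, p2, p3, p4]
    have hpos : (0:ℝ) < (1 - ρ) * (Real.sqrt k * lam) := mul_pos h1ρ (mul_pos hsk hlam0)
    rw [← mul_le_mul_iff_right₀ hpos]
    calc (1 - ρ) * (Real.sqrt k * lam) * l2norm v
        = (1 - ρ) * (Real.sqrt k * (lam * l2norm v)) := by ring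
      _ ≤ 2 * (1 + ρ) ^ 2 * lam * l1wnorm w (fun i => if i ∈ S then 0 else x i) +
            (1 + ρ) ^ 2 * ΔG +
            ((1 + ρ) ^ 2 + (3 + ρ) * γ * (Real.sqrt k * lam)) * E := hclear
      _ = (1 - ρ) * (Real.sqrt k * lam) *
            ((2 * ((1 + ρ) ^ 2 / (1 - ρ) / Real.sqrt k)) *
              l1wnorm w (fun i => if i ∈ S then 0 else x i) +
            ((1 + ρ) ^ 2 / (1 - ρ) / Real.sqrt k * (ΔG / lam) +
              ((1 + ρ) ^ 2 / (1 - ρ) / (Real.sqrt k * lam) + (3 + ρ) * γ / (1 - ρ)) * E)) := by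
          field_simp
          ring
  -- pass to the infimum
  have hne : ({r : ℝ | ∃ S : Finset (Fin N), (∑ i ∈ S, w i ^ 2) ≤ k ∧
      r = l1wnorm w fun i => if i ∈ S then 0 else x i}).Nonempty :=
    ⟨_, ⟨(∅ : Finset (Fin N)), by simp [hk.le], rfl⟩⟩
  have haC : (0:ℝ) < 2 * ((1 + ρ) ^ 2 / (1 - ρ) / Real.sqrt k) := by
    have : (0:ℝ) < (1 + ρ) ^ 2 := by positivity
    have := div_pos (div_pos this h1ρ) hsk
    linarith
  have hInf : (l2norm v - ((1 + ρ) ^ 2 / (1 - ρ) / Real.sqrt k * (ΔG / lam) +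
      ((1 + ρ) ^ 2 / (1 - ρ) / (Real.sqrt k * lam) + (3 + ρ) * γ / (1 - ρ)) * E)) /
        (2 * ((1 + ρ) ^ 2 / (1 - ρ) / Real.sqrt k)) ≤ sigmaK k w x := by
    unfold sigmaK
    refine le_csInf hne fun s hs => ?_
    rw [div_le_iff₀ haC]
    have := key s hs
    linarith
  rw [div_le_iff₀ haC] at hInf
  linarith [hInf]
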